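/- Let b̂₁ ∈ (0,1) be the unique solution of 1 = b̂₁²/((1 − b̂₁²)²(1 + b̂₁²)), b̂₂ := 1, Σ̂₀ := Σ₀, Σ̂₁ := Σ̂₀/(1 + b̂₁²), β̂₁ := b̂₁σᵤ/√(Σ̂₀Δ), β̂₂ := b̂₂σᵤ/√(Σ̂₁Δ). Then (β̂₁, β̂₂) lies in the domain of T (all denominators are nonzero) and T(β̂₁, β̂₂) = (β̂₁, β̂₂). -/

import Mathlib

/-- First coordinate of the two-period policy-iteration map. -/
noncomputable def T2p1 (Δ σu Sig0 β1 β2 : ℝ) : ℝ :=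
  (β1 ^ 2 * Δ * Sig0 + σu ^ 2) *
      (β1 * Δ * Sig0 * (β1 - β2) ^ 2 + σu ^ 2 * (β1 - 2 * β2)) /
    (β1 * Δ * Sig0 *
      (β1 * Δ * Sig0 * (β1 ^ 2 - 4 * β1 * β2 + β2 ^ 2) + σu ^ 2 * (β1 - 4 * β2)))

/-- Second coordinate of the two-period policy-iteration map. -/
noncomputable def T2p2 (Δ σu Sig0 β1 β2 : ℝ) : ℝ :=
  (Δ * Sig0 * (β1 ^ 2 + β2 ^ 2) + σu ^ 2) / (2 * β2 * Δ * Sig0)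

/-- Kyle's two-period equilibrium `(β̂₁, β̂₂)` (built from the unique `b̂₁ ∈ (0,1)`
with `1 = b̂₁²/((1-b̂₁²)²(1+b̂₁²))`) lies in the domain of `T` (both denominators
are nonzero) and is a fixed point of `T`. -/
theorem two_period_fixed_point (Δ σu Sig0 : ℝ) (hΔ : 0 < Δ) (hσ : 0 < σu)
    (hSig : 0 < Sig0) (b1 : ℝ) (hb1 : b1 ∈ Set.Ioo (0 : ℝ) 1)
    (hb1eq : 1 = b1 ^ 2 / ((1 - b1 ^ 2) ^ 2 * (1 + b1 ^ 2))) :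
    let β1 : ℝ := b1 * σu / Real.sqrt (Sig0 * Δ)
    let β2 : ℝ := 1 * σu / Real.sqrt (Sig0 / (1 + b1 ^ 2) * Δ)
    β1 * Δ * Sig0 *
        (β1 * Δ * Sig0 * (β1 ^ 2 - 4 * β1 * β2 + β2 ^ 2) + σu ^ 2 * (β1 - 4 * β2)) ≠ 0 ∧
    2 * β2 * Δ * Sig0 ≠ 0 ∧
    T2p1 Δ σu Sig0 β1 β2 = β1 ∧ T2p2 Δ σu Sig0 β1 β2 = β2 := by
  obtain ⟨hb0, hblt⟩ := hb1
  intro β1 β2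
  set s := Real.sqrt (Sig0 * Δ) with hs_def
  have hspos : 0 < s := Real.sqrt_pos.mpr (by positivity)
  have hs2 : s ^ 2 = Sig0 * Δ := Real.sq_sqrt (by positivity)
  set c := Real.sqrt (1 + b1 ^ 2) with hc_def
  have hcpos : 0 < c := Real.sqrt_pos.mpr (by positivity)
  have hc2 : c ^ 2 = 1 + b1 ^ 2 := Real.sq_sqrt (by positivity)
  have hc1 : 1 < c := by nlinarith
  have h1b : 0 < 1 - b1 ^ 2 := by nlinarith
  -- the root equation gives b1 = (1 - b1^2) * c
  have hkey : b1 = (1 - b1 ^ 2) * c := by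
    have hden : (1 - b1 ^ 2) ^ 2 * (1 + b1 ^ 2) ≠ 0 :=
      ne_of_gt (mul_pos (pow_pos h1b 2) (by positivity))
    have h1 : b1 ^ 2 = ((1 - b1 ^ 2) * c) ^ 2 := by
      field_simp at hb1eq
      linear_combination -hb1eq - (1 - b1 ^ 2) ^ 2 * hc2
    have h2 : (b1 - (1 - b1 ^ 2) * c) * (b1 + (1 - b1 ^ 2) * c) = 0 := by
      linear_combination h1
    rcases mul_eq_zero.mp h2 with h | h
    · linarith
    · nlinarith [mul_pos h1b hcpos]
  -- β2 in terms of s and c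
  have hβ2 : β2 = σu * c / s := by
    show 1 * σu / Real.sqrt (Sig0 / (1 + b1 ^ 2) * Δ) = σu * c / s
    have h : Sig0 / (1 + b1 ^ 2) * Δ = (Sig0 * Δ) / (1 + b1 ^ 2) := by ring
    rw [h, Real.sqrt_div (by positivity), ← hs_def, ← hc_def]
    field_simp
  have hβ1 : β1 = b1 * σu / s := rfl
  have hsne : s ≠ 0 := ne_of_gt hspos
  have hcne : c ≠ 0 := ne_of_gt hcpos
  have hb1ne : b1 ≠ 0 := ne_of_gt hb0
  have hSig0 : Sig0 = s ^ 2 / Δ := by rw [eq_div_iff (ne_of_gt hΔ)]; linarith [hs2]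
  -- value of the first denominator
  have hD : β1 * Δ * Sig0 *
      (β1 * Δ * Sig0 * (β1 ^ 2 - 4 * β1 * β2 + β2 ^ 2) + σu ^ 2 * (β1 - 4 * β2))
      = 2 * b1 * σu ^ 4 * (1 + b1 ^ 2) * (b1 - 2 * c) := by
    rw [hβ1, hβ2, hSig0]
    field_simp
    linear_combination b1 * hc2
  have hb2c : b1 - 2 * c < 0 := by nlinarith
  have hDne : β1 * Δ * Sig0 *
      (β1 * Δ * Sig0 * (β1 ^ 2 - 4 * β1 * β2 + β2 ^ 2) + σu ^ 2 * (β1 - 4 * β2)) ≠ 0 := by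
    rw [hD]
    exact ne_of_lt (mul_neg_of_pos_of_neg (by positivity) hb2c)
  have hD2ne : 2 * β2 * Δ * Sig0 ≠ 0 := by
    rw [hβ2]
    have : 0 < 2 * (σu * c / s) * Δ * Sig0 := by positivity
    exact ne_of_gt this
  refine ⟨hDne, hD2ne, ?_, ?_⟩
  · rw [T2p1, div_eq_iff hDne, hD, hβ1, hβ2, hSig0]
    field_simp
    linear_combination b1 * (1 + b1 ^ 2) * hc2 + 2 * (1 + b1 ^ 2) * hkey
  · rw [T2p2, div_eq_iff hD2ne, hβ2, hβ1, hSig0]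
    field_simp
    linear_combination -hc2
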